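/- For all real x > 0, the trigamma function satisfies 1/x + 1/(2x²) + 1/(6x³) − 1/(30x⁵) + 1/(42x⁷) − 1/(30x⁹) < ψ'(x) < 1/x + 1/(2x²) + 1/(6x³) − 1/(30x⁵) + 1/(42x⁷) − 1/(30x⁹) + 5/(66x¹¹). -/

import Mathlib

open Real Filter Topology

noncomputable def digamma (x : ℝ) : ℝ := deriv (fun t : ℝ => Real.log (Real.Gamma t)) x

noncomputable def trigamma (x : ℝ) : ℝ := ∑' n : ℕ, 1 / (x + n) ^ 2

noncomputable def Lb (x : ℝ) : ℝ :=
  1/x + 1/(2*x^2) + 1/(6*x^3) - 1/(30*x^5) + 1/(42*x^7) - 1/(30*x^9)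

noncomputable def Ub (x : ℝ) : ℝ := Lb x + 5/(66*x^11)

lemma summable_tri {x : ℝ} (hx : 0 < x) : Summable (fun n : ℕ => 1 / (x + n) ^ 2) := by
  rw [← summable_nat_add_iff 1]
  have hs : Summable (fun n : ℕ => 1 / ((n : ℝ) + 1) ^ 2) := by
    have := (summable_nat_add_iff 1).mpr
      (Real.summable_one_div_nat_pow.mpr (le_refl 2))
    exact this.congr fun n => by push_cast; ring_nf
  refine hs.of_nonneg_of_le (fun n => by positivity) fun n => ?_
  refine one_div_le_one_div_of_le (by positivity) ?_
  exact pow_le_pow_left₀ (by positivity) (by push_cast; linarith) 2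

lemma trigamma_rec {x : ℝ} (hx : 0 < x) : trigamma x = 1 / x ^ 2 + trigamma (x + 1) := by
  unfold trigamma
  rw [Summable.tsum_eq_zero_add (summable_tri hx)]
  congr 1
  · norm_num
  · exact tsum_congr fun n => by push_cast; ring_nf

lemma trigamma_nonneg {x : ℝ} (hx : 0 < x) : 0 ≤ trigamma x :=
  tsum_nonneg fun n => by positivity

lemma telescope_hasSum {x : ℝ} (hx : 0 < x) :
    HasSum (fun n : ℕ => 1 / ((x + n) * (x + n + 1))) (1 / x) := by
  have key : ∀ n : ℕ, 1 / ((x + n) * (x + n + 1)) = 1 / (x + n) - 1 / (x + ((n+1:ℕ):ℝ)) := by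
    intro n
    have h1 : (0:ℝ) < x + n := by positivity
    have h2 : (0:ℝ) < x + n + 1 := by positivity
    push_cast
    rw [show x + ((n:ℝ)+1) = x + n + 1 by ring, div_sub_div _ _ h1.ne' h2.ne']
    congr 1 <;> ring
  rw [hasSum_iff_tendsto_nat_of_nonneg (fun n => by positivity)]
  have : ∀ n : ℕ, ∑ i ∈ Finset.range n, 1 / ((x + i) * (x + i + 1))
      = 1 / (x + 0) - 1 / (x + n) := by
    intro n
    have hts := Finset.sum_range_sub' (fun i : ℕ => 1 / (x + i)) n
    simp only [Nat.cast_zero] at hts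
    rw [← hts]
    exact Finset.sum_congr rfl fun i _ => key i
  simp only [this]
  have h1 : Tendsto (fun n : ℕ => x + (n : ℝ)) atTop atTop :=
    tendsto_atTop_add_const_left _ _ tendsto_natCast_atTop_atTop
  have h2 : Tendsto (fun n : ℕ => 1 / (x + (n:ℝ))) atTop (𝓝 0) := by
    simpa [Pi.inv_def] using h1.inv_tendsto_atTop
  have := (tendsto_const_nhds (x := (1 : ℝ) / (x + 0)) (f := atTop (α := ℕ))).sub h2
  simpa using this

lemma trigamma_le {x : ℝ} (hx : 0 < x) : trigamma x ≤ 1 / x ^ 2 + 1 / x := by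
  rw [trigamma_rec hx]
  gcongr
  have hsum := telescope_hasSum hx
  rw [← hsum.tsum_eq]
  refine Summable.tsum_le_tsum (fun n => ?_) (summable_tri (by linarith)) hsum.summable
  have h1 : (0:ℝ) < x + n := by positivity
  have h2 : (0:ℝ) < x + n + 1 := by positivity
  rw [div_le_div_iff₀ (by positivity) (by positivity)]
  nlinarith

lemma tendsto_aux (x : ℝ) (k : ℕ) (hk : 0 < k) (c : ℝ) :
    Tendsto (fun n : ℕ => c / (x + n) ^ k) atTop (𝓝 0) := by
  have h1 : Tendsto (fun n : ℕ => x + (n : ℝ)) atTop atTop :=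
    tendsto_atTop_add_const_left _ _ tendsto_natCast_atTop_atTop
  have h2 : Tendsto (fun n : ℕ => (x + (n:ℝ)) ^ k) atTop atTop :=
    (tendsto_pow_atTop hk.ne').comp h1
  have h3 : Tendsto (fun n : ℕ => ((x + (n:ℝ)) ^ k)⁻¹) atTop (𝓝 0) :=
    h2.inv_tendsto_atTop
  simpa [div_eq_mul_inv] using h3.const_mul c

lemma tendsto_trigamma (x : ℝ) (hx : 0 < x) :
    Tendsto (fun n : ℕ => trigamma (x + n)) atTop (𝓝 0) := by
  have hb : ∀ n : ℕ, trigamma (x + n) ≤ 1 / (x + n) ^ 2 + 1 / (x + n) :=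
    fun n => trigamma_le (by positivity)
  have h0 : ∀ n : ℕ, 0 ≤ trigamma (x + n) := fun n => trigamma_nonneg (by positivity)
  have hlim : Tendsto (fun n : ℕ => 1 / (x + (n:ℝ)) ^ 2 + 1 / (x + n)) atTop (𝓝 0) := by
    have := (tendsto_aux x 2 two_pos 1).add (tendsto_aux x 1 one_pos 1)
    simpa using this
  exact squeeze_zero h0 hb hlim

lemma tendsto_Lb (x : ℝ) : Tendsto (fun n : ℕ => Lb (x + n)) atTop (𝓝 0) := by
  unfold Lb
  have h : ∀ c : ℝ, ∀ k : ℕ, 0 < k →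
      Tendsto (fun n : ℕ => 1 / (c * (x + n) ^ k)) atTop (𝓝 0) := by
    intro c k hk
    have := tendsto_aux x k hk c⁻¹
    refine this.congr fun n => ?_
    rw [div_eq_mul_inv, div_eq_mul_inv, one_mul, mul_inv]
  have h1 := tendsto_aux x 1 one_pos 1
  have h2 := h 2 2 two_pos
  have h3 := h 6 3 three_pos
  have h5 := h 30 5 (by norm_num)
  have h7 := h 42 7 (by norm_num)
  have h9 := h 30 9 (by norm_num)
  have := ((((h1.add h2).add h3).sub h5).add h7).sub h9
  simpa using this

lemma tendsto_Ub (x : ℝ) : Tendsto (fun n : ℕ => Ub (x + n)) atTop (𝓝 0) := by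
  unfold Ub
  have h11 : Tendsto (fun n : ℕ => 5 / (66 * (x + (n:ℝ)) ^ 11)) atTop (𝓝 0) := by
    have := tendsto_aux x 11 (by norm_num) (5 / 66)
    refine this.congr fun n => ?_
    rw [div_div]
  have := (tendsto_Lb x).add h11
  simpa using this

lemma d_pos {y : ℝ} (hy : 0 < y) : Lb y - Lb (y + 1) < 1 / y ^ 2 := by
  have hy1 : (0:ℝ) < y + 1 := by linarith
  have key : 1 / y ^ 2 - (Lb y - Lb (y + 1)) =
      (7 + 63*y + 247*y^2 + 543*y^3 + 709*y^4 + 525*y^5 + 175*y^6) /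
      (210 * y ^ 9 * (y + 1) ^ 9) := by
    unfold Lb
    field_simp
    ring
  nlinarith [key, div_pos (show (0:ℝ) < 7 + 63*y + 247*y^2 + 543*y^3 + 709*y^4 + 525*y^5 + 175*y^6 by positivity) (show (0:ℝ) < 210 * y ^ 9 * (y + 1) ^ 9 by positivity)]

lemma e_pos {y : ℝ} (hy : 0 < y) : 1 / y ^ 2 < Ub y - Ub (y + 1) := by
  have hy1 : (0:ℝ) < y + 1 := by linarith
  have key : (Ub y - Ub (y + 1)) - 1 / y ^ 2 =
      (175 + 1925*y + 9548*y^2 + 28028*y^3 + 53570*y^4 + 68750*y^5 + 58388*y^6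
        + 30404*y^7 + 7601*y^8) / (2310 * y ^ 11 * (y + 1) ^ 11) := by
    unfold Ub Lb
    field_simp
    ring
  nlinarith [key, div_pos (show (0:ℝ) < 175 + 1925*y + 9548*y^2 + 28028*y^3 + 53570*y^4 + 68750*y^5 + 58388*y^6 + 30404*y^7 + 7601*y^8 by positivity) (show (0:ℝ) < 2310 * y ^ 11 * (y + 1) ^ 11 by positivity)]

theorem stmt_11 (x : ℝ) (hx : 0 < x) :
    1/x + 1/(2*x^2) + 1/(6*x^3) - 1/(30*x^5) + 1/(42*x^7) - 1/(30*x^9) < trigamma x ∧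
    trigamma x < 1/x + 1/(2*x^2) + 1/(6*x^3) - 1/(30*x^5) + 1/(42*x^7) - 1/(30*x^9) + 5/(66*x^11) := by
  have hxn : ∀ n : ℕ, (0:ℝ) < x + n := fun n => by positivity
  have hcast : ∀ n : ℕ, x + (n:ℝ) + 1 = x + ((n+1 : ℕ) : ℝ) := fun n => by push_cast; ring
  -- lower bound
  have hlow : Lb x < trigamma x := by
    set g : ℕ → ℝ := fun n => trigamma (x + n) - Lb (x + n) with hg
    have hstep : ∀ n : ℕ, g (n + 1) < g n := by
      intro n
      have h1 := trigamma_rec (hxn n)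
      have h2 := d_pos (hxn n)
      simp only [hg, ← hcast n]
      linarith
    have hanti : StrictAnti g := strictAnti_nat_of_succ_lt hstep
    have hlim : Tendsto g atTop (𝓝 0) := by
      simpa using (tendsto_trigamma x hx).sub (tendsto_Lb x)
    have h1 : 0 ≤ g 1 := by
      refine le_of_tendsto hlim ?_
      filter_upwards [eventually_ge_atTop 1] with n hn
      exact hanti.antitone hn
    have h0 : g 1 < g 0 := hstep 0
    have : 0 < g 0 := by linarith
    simpa [hg] using this
  have hhigh : trigamma x < Ub x := by
    set h : ℕ → ℝ := fun n => Ub (x + n) - trigamma (x + n) with hh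
    have hstep : ∀ n : ℕ, h (n + 1) < h n := by
      intro n
      have h1 := trigamma_rec (hxn n)
      have h2 := e_pos (hxn n)
      simp only [hh, ← hcast n]
      linarith
    have hanti : StrictAnti h := strictAnti_nat_of_succ_lt hstep
    have hlim : Tendsto h atTop (𝓝 0) := by
      simpa using (tendsto_Ub x).sub (tendsto_trigamma x hx)
    have h1 : 0 ≤ h 1 := by
      refine le_of_tendsto hlim ?_
      filter_upwards [eventually_ge_atTop 1] with n hn
      exact hanti.antitone hn
    have h0 : h 1 < h 0 := hstep 0
    have : 0 < h 0 := by linarith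
    simpa [hh] using this
  constructor
  · have : Lb x = 1/x + 1/(2*x^2) + 1/(6*x^3) - 1/(30*x^5) + 1/(42*x^7) - 1/(30*x^9) := rfl
    linarith
  · have : Ub x = 1/x + 1/(2*x^2) + 1/(6*x^3) - 1/(30*x^5) + 1/(42*x^7) - 1/(30*x^9) + 5/(66*x^11) := rfl
    linarith
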